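/- In the setting of the forward step with selected coordinate j* and step α* ≠ 0 achieving decrease δ > 0, under RSC with κ_l and RSS with κ_u on the line θ^{(k-1)} + α e_{j*}: the gradient satisfies sign(∇_{j*}L(θ^{(k-1)})) = −sign(α*) and κ_l|α*| ≤ |∇_{j*}L(θ^{(k-1)})| ≤ κ_u|α*|. -/

import Mathlib

/-- Gradient–step-size comparison for the forward step: along the selected
coordinate, with `φ(α) = L(θ^{(k-1)} + α e_{j*})` satisfying RSC with `κₗ` and RSS
with `κᵤ` (derivative `g`), if `α* ≠ 0` minimizes `φ` and achieves decrease
`δ = φ(0) − φ(α*) > 0`, then the gradient at `0` has sign opposite to `α*` and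
`κₗ|α*| ≤ |g(0)| ≤ κᵤ|α*|`. -/
theorem forward_step_gradient_comparison (φ g : ℝ → ℝ) (κl κu αstar δ : ℝ)
    (hκl : 0 < κl) (hκlu : κl ≤ κu) (hαstar : αstar ≠ 0)
    (hRSC : ∀ a b : ℝ, φ b ≥ φ a + g a * (b - a) + (κl / 2) * (b - a) ^ 2)
    (hRSS : ∀ a b : ℝ, φ b ≤ φ a + g a * (b - a) + (κu / 2) * (b - a) ^ 2)
    (hmin : ∀ α : ℝ, φ αstar ≤ φ α)
    (hδ : δ = φ 0 - φ αstar) (hδpos : 0 < δ) :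
    g 0 * αstar < 0 ∧ κl * |αstar| ≤ |g 0| ∧ |g 0| ≤ κu * |αstar| := by
  have hκu : 0 < κu := lt_of_lt_of_le hκl hκlu
  have hA2 : 0 < αstar ^ 2 := by positivity
  have hga : g αstar = 0 := by
    have key : ∀ t : ℝ, g αstar * t ≥ -(κu / 2) * t ^ 2 := by
      intro t
      have h1 := hRSS αstar (αstar + t)
      have h2 := hmin (αstar + t)
      nlinarith
    have h := key (-(g αstar) / κu)
    have h' : -(g αstar ^ 2) / κu ≥ -(g αstar ^ 2) / (2 * κu) := by
      have e1 : g αstar * (-(g αstar) / κu) = -(g αstar ^ 2) / κu := by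
        field_simp
      have e2 : -(κu / 2) * (-(g αstar) / κu) ^ 2 = -(g αstar ^ 2) / (2 * κu) := by
        field_simp
      linarith [e1 ▸ e2 ▸ h]
    rw [ge_iff_le, div_le_div_iff₀ (by positivity) hκu] at h'
    have hX : g αstar ^ 2 * κu = 0 :=
      le_antisymm (by nlinarith) (by positivity)
    rcases mul_eq_zero.mp hX with h0 | h0
    · exact sq_eq_zero_iff.mp h0
    · exact absurd h0 hκu.ne'
  have hδlb : (κl / 2) * αstar ^ 2 ≤ δ := by
    have := hRSC αstar 0; rw [hga] at this; nlinarith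
  have hδub : δ ≤ (κu / 2) * αstar ^ 2 := by
    have := hRSS αstar 0; rw [hga] at this; nlinarith
  have h1 := hRSC 0 αstar
  have h2 := hRSS 0 αstar
  have hm := hmin 0
  have hneg : g 0 * αstar < 0 := by nlinarith
  have habs : |g 0| * |αstar| = -(g 0 * αstar) := by
    rw [← abs_mul]; exact abs_of_neg hneg
  have hαpos : 0 < |αstar| := abs_pos.mpr hαstar
  have hsq : |αstar| ^ 2 = αstar ^ 2 := sq_abs αstar
  refine ⟨hneg, ?_, ?_⟩
  · rw [← mul_le_mul_iff_of_pos_right hαpos]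
    nlinarith
  · rw [← mul_le_mul_iff_of_pos_right hαpos]
    nlinarith
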